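/- Let M and N be matroids of ranks r and s on the same ground set E such that every flat of N is a flat of M. Fix a finite set R disjoint from E with |R| = r − s. Then the function on subsets of E ⊔ R defined by rank_Q(I ⊔ J) = min{rank_M(I) + |J|, rank_N(I) + r − s} (for I ⊆ E, J ⊆ R) is the rank function of a matroid Q on E ⊔ R. -/
import Mathlib


/-- A matroid given by its rank function on subsets of a finite ground set. -/
structure MatroidRank (α : Type) [DecidableEq α] [Fintype α] where
  r : Finset α → ℕ
  r_empty : r ∅ = 0
  r_le_insert : ∀ A x, r A ≤ r (insert x A)
  insert_le : ∀ A x, r (insert x A) ≤ r A + 1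
  r_local : ∀ A x y, r (insert x A) = r A → r (insert y A) = r A →
    r (insert x (insert y A)) = r A

variable {α : Type} [DecidableEq α] [Fintype α]

/-- `F` is a flat (closed set) of the matroid `M`. -/
def MatroidRank.IsFlat (M : MatroidRank α) (F : Finset α) : Prop :=
  ∀ x ∉ F, M.r F < M.r (insert x F)

/-- Closure of a set in the matroid `M`. -/
def MatroidRank.cl (M : MatroidRank α) (A : Finset α) : Finset α :=
  Finset.univ.filter (fun x => M.r (insert x A) = M.r A)

/-- The matroid `M` has no loops. -/
def MatroidRank.Loopfree (M : MatroidRank α) : Prop :=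
  ∀ x : α, M.r {x} = 1


/-- the part of a subset of a disjoint union lying in the first factor. -/
def leftPart {β : Type} [DecidableEq β] [Fintype β] (S : Finset (α ⊕ β)) : Finset α :=
  Finset.univ.filter (fun a => Sum.inl a ∈ S)

/-- the part of a subset of a disjoint union lying in the second factor. -/
def rightPart {β : Type} [DecidableEq β] [Fintype β] (S : Finset (α ⊕ β)) : Finset β :=
  Finset.univ.filter (fun b => Sum.inr b ∈ S)

namespace MatroidRank
variable (M : MatroidRank α)

lemma r_le_union (A C : Finset α) : M.r A ≤ M.r (A ∪ C) := by
  induction C using Finset.induction_on with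
  | empty => simp
  | @insert a s ha ih =>
      rw [Finset.union_insert]
      exact ih.trans (M.r_le_insert _ a)

lemma r_mono {A B : Finset α} (h : A ⊆ B) : M.r A ≤ M.r B := by
  have := M.r_le_union A B
  rwa [Finset.union_eq_right.mpr h] at this

lemma r_insert_union (x : α) (A : Finset α) (h : M.r (insert x A) = M.r A)
    (C : Finset α) : M.r (insert x (A ∪ C)) = M.r (A ∪ C) := by
  induction C using Finset.induction_on with
  | empty => simpa
  | @insert a s ha ih =>
      rw [Finset.union_insert]
      by_cases hz : M.r (insert a (A ∪ s)) = M.r (A ∪ s)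
      · exact (M.r_local (A ∪ s) x a ih hz).trans hz.symm
      · have h1 := M.insert_le (A ∪ s) a
        have h2 := M.r_le_insert (A ∪ s) a
        rw [Finset.insert_comm]
        have h5 := M.insert_le (insert x (A ∪ s)) a
        have h6 : M.r (insert a (A ∪ s)) ≤ M.r (insert a (insert x (A ∪ s))) :=
          M.r_mono (Finset.insert_subset_insert _ (Finset.subset_insert _ _))
        omega

lemma spanning {x : α} {A B : Finset α} (h : M.r (insert x A) = M.r A)
    (hAB : A ⊆ B) : M.r (insert x B) = M.r B := by
  have := M.r_insert_union x A h B
  rwa [Finset.union_eq_right.mpr hAB] at this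

lemma mem_cl {x : α} {A : Finset α} : x ∈ M.cl A ↔ M.r (insert x A) = M.r A := by
  simp [cl]

lemma subset_cl (A : Finset α) : A ⊆ M.cl A := by
  intro x hx
  exact M.mem_cl.mpr (by rw [Finset.insert_eq_self.mpr hx])

lemma r_cl (A : Finset α) : M.r (M.cl A) = M.r A := by
  have key : ∀ C : Finset α, (∀ x ∈ C, M.r (insert x A) = M.r A) →
      M.r (A ∪ C) = M.r A := by
    intro C
    induction C using Finset.induction_on with
    | empty => simp
    | @insert a s ha ih =>
        intro h
        rw [Finset.union_insert, M.r_insert_union a A (h a (Finset.mem_insert_self a s)) s]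
        exact ih fun x hx => h x (Finset.mem_insert_of_mem hx)
  have h := key (M.cl A) (fun x hx => M.mem_cl.mp hx)
  rwa [Finset.union_eq_right.mpr (M.subset_cl A)] at h

lemma cl_flat (A : Finset α) : M.IsFlat (M.cl A) := by
  intro x hx
  have h1 := M.r_le_insert (M.cl A) x
  have h2 : ¬ (M.r (insert x (M.cl A)) = M.r (M.cl A)) := by
    intro heq
    apply hx
    apply M.mem_cl.mpr
    have h3 : M.r (insert x A) ≤ M.r (insert x (M.cl A)) :=
      M.r_mono (Finset.insert_subset_insert _ (M.subset_cl A))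
    have h4 := M.r_cl A
    have h5 := M.r_le_insert A x
    omega
  omega

end MatroidRank

lemma rank_eq_of_flats {M N : MatroidRank α} (hflats : ∀ F, N.IsFlat F → M.IsFlat F)
    {x : α} {A : Finset α} (h : M.r (insert x A) = M.r A) :
    N.r (insert x A) = N.r A := by
  have hx : x ∈ N.cl A := by
    by_contra hx
    have hf := hflats _ (N.cl_flat A) x hx
    have := M.spanning h (N.subset_cl A)
    omega
  exact N.mem_cl.mp hx

section Parts
variable {β : Type} [DecidableEq β] [Fintype β]

lemma leftPart_empty : leftPart (∅ : Finset (α ⊕ β)) = ∅ := by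
  ext t; simp [leftPart]

lemma rightPart_empty : rightPart (∅ : Finset (α ⊕ β)) = ∅ := by
  ext t; simp [rightPart]

lemma leftPart_insert_inl (a : α) (S : Finset (α ⊕ β)) :
    leftPart (insert (Sum.inl a) S) = insert a (leftPart S) := by
  ext t; simp [leftPart]

lemma rightPart_insert_inl (a : α) (S : Finset (α ⊕ β)) :
    rightPart (insert (Sum.inl a) S) = rightPart S := by
  ext t; simp [rightPart]

lemma leftPart_insert_inr (b : β) (S : Finset (α ⊕ β)) :
    leftPart (insert (Sum.inr b) S) = leftPart S := by
  ext t; simp [leftPart]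

lemma rightPart_insert_inr (b : β) (S : Finset (α ⊕ β)) :
    rightPart (insert (Sum.inr b) S) = insert b (rightPart S) := by
  ext t; simp [rightPart]

end Parts

/-- If the min-rank of `insert a I` equals that of `I`, then the `N`-rank did not grow. -/
lemma hN_helper (M N : MatroidRank α) (hflats : ∀ F, N.IsFlat F → M.IsFlat F)
    {a : α} {I : Finset α} {j k : ℕ}
    (hx : min (M.r (insert a I) + j) (N.r (insert a I) + k)
        = min (M.r I + j) (N.r I + k)) :
    N.r (insert a I) = N.r I := by
  by_cases hMa : M.r (insert a I) = M.r I
  · exact rank_eq_of_flats hflats hMa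
  · have h1 := M.r_le_insert I a
    have h2 := M.insert_le I a
    have h3 := N.r_le_insert I a
    omega

/-- The function S ↦ min{rank_M(I) + |J|, rank_N(I) + (r−s)} on subsets of E ⊔ R
(with |R| = r − s) is the rank function of a matroid. -/
theorem quotient_construction_is_matroid (M N : MatroidRank α)
    (hflats : ∀ F, N.IsFlat F → M.IsFlat F)
    (β : Type) [DecidableEq β] [Fintype β]
    (hcard : Fintype.card β + N.r Finset.univ = M.r Finset.univ) :
    ∃ Q : MatroidRank (α ⊕ β), ∀ S : Finset (α ⊕ β),
      Q.r S = min (M.r (leftPart S) + (rightPart S).card)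
        (N.r (leftPart S) + Fintype.card β) := by
  refine ⟨⟨fun S => min (M.r (leftPart S) + (rightPart S).card)
      (N.r (leftPart S) + Fintype.card β), ?_, ?_, ?_, ?_⟩, fun S => rfl⟩
  · -- empty
    simp [leftPart_empty, rightPart_empty, M.r_empty, N.r_empty]
  · -- r_le_insert
    intro S x
    cases x with
    | inl a =>
        simp only [leftPart_insert_inl, rightPart_insert_inl]
        have h1 := M.r_le_insert (leftPart S) a
        have h2 := N.r_le_insert (leftPart S) a
        omega
    | inr b =>
        simp only [leftPart_insert_inr, rightPart_insert_inr]
        have h1 : (rightPart S).card ≤ (insert b (rightPart S)).card :=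
          Finset.card_le_card (Finset.subset_insert _ _)
        omega
  · -- insert_le
    intro S x
    cases x with
    | inl a =>
        simp only [leftPart_insert_inl, rightPart_insert_inl]
        have h1 := M.insert_le (leftPart S) a
        have h2 := N.insert_le (leftPart S) a
        have h3 := M.r_le_insert (leftPart S) a
        have h4 := N.r_le_insert (leftPart S) a
        omega
    | inr b =>
        simp only [leftPart_insert_inr, rightPart_insert_inr]
        have h1 := Finset.card_insert_le b (rightPart S)
        have h2 : (rightPart S).card ≤ (insert b (rightPart S)).card :=
          Finset.card_le_card (Finset.subset_insert _ _)
        omega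
  · -- r_local
    intro S x y hx hy
    cases x with
    | inl a =>
      cases y with
      | inl a' =>
          simp only [leftPart_insert_inl, rightPart_insert_inl] at hx hy ⊢
          have hNa := hN_helper M N hflats hx
          have hNa' := hN_helper M N hflats hy
          have hN2 := N.r_local (leftPart S) a a' hNa hNa'
          have hMge : M.r (leftPart S) ≤ M.r (insert a (insert a' (leftPart S))) :=
            M.r_mono ((Finset.subset_insert _ _).trans (Finset.subset_insert _ _))
          by_cases hMa : M.r (insert a (leftPart S)) = M.r (leftPart S)
          · by_cases hMa' : M.r (insert a' (leftPart S)) = M.r (leftPart S)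
            · have hM2 := M.r_local (leftPart S) a a' hMa hMa'
              omega
            · have h1 := M.r_le_insert (leftPart S) a'
              have h2 := M.insert_le (leftPart S) a'
              omega
          · have h1 := M.r_le_insert (leftPart S) a
            have h2 := M.insert_le (leftPart S) a
            omega
      | inr b =>
          simp only [leftPart_insert_inl, rightPart_insert_inl,
            leftPart_insert_inr, rightPart_insert_inr] at hx hy ⊢
          have hNa := hN_helper M N hflats hx
          have h1 := M.r_le_insert (leftPart S) a
          have h2 := M.insert_le (leftPart S) a
          have c1 : (rightPart S).card ≤ (insert b (rightPart S)).card :=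
            Finset.card_le_card (Finset.subset_insert _ _)
          have c2 := Finset.card_insert_le b (rightPart S)
          omega
    | inr b =>
      cases y with
      | inl a =>
          simp only [leftPart_insert_inl, rightPart_insert_inl,
            leftPart_insert_inr, rightPart_insert_inr] at hx hy ⊢
          have hNa := hN_helper M N hflats hy
          have h1 := M.r_le_insert (leftPart S) a
          have h2 := M.insert_le (leftPart S) a
          have c1 : (rightPart S).card ≤ (insert b (rightPart S)).card :=
            Finset.card_le_card (Finset.subset_insert _ _)
          have c2 := Finset.card_insert_le b (rightPart S)
          omega
      | inr b' =>
          simp only [leftPart_insert_inr, rightPart_insert_inr] at hx hy ⊢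
          by_cases hb' : b' ∈ rightPart S
          · rw [Finset.insert_eq_self.mpr hb']
            exact hx
          · by_cases hbm : b ∈ insert b' (rightPart S)
            · rw [Finset.insert_eq_self.mpr hbm]
              exact hy
            · have hbJ : b ∉ rightPart S := fun h => hbm (Finset.mem_insert_of_mem h)
              have e1 : (insert b' (rightPart S)).card = (rightPart S).card + 1 :=
                Finset.card_insert_of_notMem hb'
              have e2 : (insert b (rightPart S)).card = (rightPart S).card + 1 :=
                Finset.card_insert_of_notMem hbJ
              have e3 : (insert b (insert b' (rightPart S))).card = (rightPart S).card + 2 := by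
                rw [Finset.card_insert_of_notMem hbm, e1]
              omega
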